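/- arXiv:2304.05770 — 4 statements merged into one kernel-verified Lean document; each statement's English description precedes it below -/
import Mathlib

section
/- Let P be a symmetric positive semidefinite n×n real matrix and C a q×n real matrix such that C P Cᵀ is positive definite. Then the measurement-updated matrix P − P Cᵀ (C P Cᵀ)⁻¹ C P is symmetric positive semidefinite. -/
open Matrix

/-- **Kalman measurement update preserves positive semidefiniteness.** If `P` is a symmetric
positive semidefinite `n × n` real matrix and `C` a `q × n` real matrix such that `C * P * Cᵀ`
is positive definite, then `P - P * Cᵀ * (C * P * Cᵀ)⁻¹ * C * P` is symmetric positive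
semidefinite. -/
theorem kalman_update_posSemidef {n q : ℕ}
    (P : Matrix (Fin n) (Fin n) ℝ) (C : Matrix (Fin q) (Fin n) ℝ)
    (hP : P.PosSemidef) (hC : (C * P * Cᵀ).PosDef) :
    (P - P * Cᵀ * (C * P * Cᵀ)⁻¹ * (C * P)).PosSemidef := by
  have hPt : Pᵀ = P := hP.isHermitian
  haveI : Invertible (C * P * Cᵀ) := hC.isUnit.invertible
  have key : (fromBlocks (C * P * Cᵀ) (C * P) (C * P)ᴴ P).PosSemidef := by
    have h := hP.mul_mul_conjTranspose_same (fromRows C (1 : Matrix (Fin n) (Fin n) ℝ))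
    have he : (fromRows C (1 : Matrix (Fin n) (Fin n) ℝ)) * P *
        (fromRows C (1 : Matrix (Fin n) (Fin n) ℝ))ᴴ =
        fromBlocks (C * P * Cᵀ) (C * P) (C * P)ᴴ P := by
      rw [fromRows_mul, conjTranspose_fromRows_eq_fromCols_conjTranspose, fromRows_mul_fromCols]
      simp [Matrix.mul_assoc, conjTranspose_mul, hP.isHermitian.eq, hPt]
    rwa [he] at h
  have := (PosDef.fromBlocks₁₁ (C * P) P hC).mp key
  have heq : (C * P)ᴴ * (C * P * Cᵀ)⁻¹ * (C * P) =
      P * Cᵀ * (C * P * Cᵀ)⁻¹ * (C * P) := by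
    simp [conjTranspose_mul, hP.isHermitian.eq, hPt]
  rwa [heq] at this
end

section
/- Let A ∈ ℝ^{n×n}, C ∈ ℝ^{q×n}, and let Σ₀, Q ∈ ℝ^{n×n} be symmetric positive semidefinite with C Σ₀ Cᵀ and C Q Cᵀ positive definite. Define the Kalman covariance recursion: P̂(0) = Σ₀; for t ≥ 0, K(t) = P̂(t) Cᵀ (C P̂(t) Cᵀ)⁻¹, P̄(t) = P̂(t) − K(t) C P̂(t), and P̂(t+1) = A P̄(t) Aᵀ + Q. Define also Σ(0) = Σ₀, Σ(t+1) = A Σ(t) Aᵀ + Q, and Σ̄(0) = Σ₀ − P̄(0), Σ̄(t+1) = A Σ̄(t) Aᵀ + K(t+1) (C P̂(t+1) Cᵀ) K(t+1)ᵀ. Then for every t ≥ 0, Σ(t) = Σ̄(t) + P̄(t). -/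
open Matrix

lemma sym_of_posSemidef {n : ℕ} {P : Matrix (Fin n) (Fin n) ℝ} (h : P.PosSemidef) : Pᵀ = P := by
  have := h.isHermitian
  rwa [IsHermitian, conjTranspose_eq_transpose_of_trivial] at this

lemma sym_of_posDef {n : ℕ} {P : Matrix (Fin n) (Fin n) ℝ} (h : P.PosDef) : Pᵀ = P :=
  sym_of_posSemidef h.posSemidef

lemma schur_psd {n q : ℕ} (C : Matrix (Fin q) (Fin n) ℝ) {P : Matrix (Fin n) (Fin n) ℝ}
    (hP : P.PosSemidef) (hM : (C * P * Cᵀ).PosDef) :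
    (P - P * Cᵀ * (C * P * Cᵀ)⁻¹ * C * P).PosSemidef := by
  obtain ⟨B, hBB, hBsym⟩ : ∃ B : Matrix (Fin n) (Fin n) ℝ, B * B = P ∧ Bᵀ = B :=
    open scoped MatrixOrder in
    ⟨CFC.sqrt P, CFC.sqrt_mul_sqrt_self P hP.nonneg, sym_of_posSemidef (CFC.sqrt_nonneg P).posSemidef⟩
  have hdet : IsUnit (C * P * Cᵀ).det := isUnit_iff_ne_zero.mpr hM.det_pos.ne'
  have hMsym : (C * P * Cᵀ)ᵀ = C * P * Cᵀ := sym_of_posDef hM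
  have hMinv : ((C * P * Cᵀ)⁻¹)ᵀ = (C * P * Cᵀ)⁻¹ := by
    rw [transpose_nonsing_inv, hMsym]
  set N := (C * P * Cᵀ)⁻¹ with hN
  have hNinv : Nᵀ = N := hMinv
  have hNM : N * (C * P * Cᵀ) = 1 := nonsing_inv_mul _ hdet
  set F := B - P * Cᵀ * N * C * B with hFdef
  have hFT : Fᵀ = B - B * Cᵀ * N * C * P := by
    rw [hFdef, transpose_sub]
    simp only [Matrix.transpose_mul, transpose_transpose, hBsym, hNinv,
      sym_of_posSemidef hP]
    simp only [Matrix.mul_assoc]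
  have hc : ∀ X : Matrix (Fin q) (Fin n) ℝ,
      C * (B * (B * (Cᵀ * X))) = C * P * Cᵀ * X := by
    intro X
    rw [← hBB]; simp only [Matrix.mul_assoc]
  have key : P - P * Cᵀ * N * C * P = F * Fᵀ := by
    rw [hFT, hFdef, Matrix.sub_mul, Matrix.mul_sub, Matrix.mul_sub]
    have h2 : B * (B * Cᵀ * N * C * P) = P * Cᵀ * N * C * P := by
      rw [← hBB]; simp only [Matrix.mul_assoc]
    have h3 : P * Cᵀ * N * C * B * B = P * Cᵀ * N * C * P := by
      rw [← hBB]; simp only [Matrix.mul_assoc]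
    have h4 : P * Cᵀ * N * C * B * (B * Cᵀ * N * C * P)
        = P * Cᵀ * N * C * P := by
      calc P * Cᵀ * N * C * B * (B * Cᵀ * N * C * P)
          = P * Cᵀ * (N * (C * (B * (B * (Cᵀ * (N * (C * P))))))) := by
            simp only [Matrix.mul_assoc]
        _ = P * Cᵀ * (N * (C * P * Cᵀ * (N * (C * P)))) := by rw [hc]
        _ = P * Cᵀ * ((N * (C * P * Cᵀ)) * (N * (C * P))) := by
            simp only [Matrix.mul_assoc]
        _ = P * Cᵀ * N * C * P := by
            rw [hNM, Matrix.one_mul]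
            simp only [Matrix.mul_assoc]
    rw [h2, h3, h4, hBB]
    abel
  rw [key, ← conjTranspose_eq_transpose_of_trivial]
  exact posSemidef_self_mul_conjTranspose F

/-- **Covariance identity for the a posteriori innovation process.** With `Σ t` (here `S t`) the
state covariance of the original system and `Σ̄ t` (here `Sb t`) the state covariance of the
abstract model (the a posteriori innovation process), one has `Σ t = Σ̄ t + P̄ t` for all `t`,
where `P̄ t` is the a posteriori Kalman error covariance. -/
theorem innovation_covariance_identity {n q : ℕ}
    (A : Matrix (Fin n) (Fin n) ℝ) (C : Matrix (Fin q) (Fin n) ℝ)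
    (S0 Q : Matrix (Fin n) (Fin n) ℝ)
    (hS0 : S0.PosSemidef) (hQ : Q.PosSemidef)
    (hCS0 : (C * S0 * Cᵀ).PosDef) (hCQ : (C * Q * Cᵀ).PosDef)
    (Phat Pbar : ℕ → Matrix (Fin n) (Fin n) ℝ) (K : ℕ → Matrix (Fin n) (Fin q) ℝ)
    (hPhat0 : Phat 0 = S0)
    (hK : ∀ t, K t = Phat t * Cᵀ * (C * Phat t * Cᵀ)⁻¹)
    (hPbar : ∀ t, Pbar t = Phat t - K t * C * Phat t)
    (hPhat : ∀ t, Phat (t + 1) = A * Pbar t * Aᵀ + Q)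
    (S Sb : ℕ → Matrix (Fin n) (Fin n) ℝ)
    (hSzero : S 0 = S0)
    (hS : ∀ t, S (t + 1) = A * S t * Aᵀ + Q)
    (hSbzero : Sb 0 = S0 - Pbar 0)
    (hSb : ∀ t, Sb (t + 1) = A * Sb t * Aᵀ + K (t + 1) * (C * Phat (t + 1) * Cᵀ) * (K (t + 1))ᵀ) :
    ∀ t, S t = Sb t + Pbar t := by
  have inv : ∀ t, (Phat t).PosSemidef ∧ (C * Phat t * Cᵀ).PosDef := by
    intro t
    induction t with
    | zero => rw [hPhat0]; exact ⟨hS0, hCS0⟩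
    | succ t ih =>
      obtain ⟨hp, hm⟩ := ih
      have hpbar : (Pbar t).PosSemidef := by
        rw [hPbar t, hK t]
        exact schur_psd C hp hm
      have hAP : (A * Pbar t * Aᵀ).PosSemidef := by
        have := hpbar.mul_mul_conjTranspose_same A
        rwa [conjTranspose_eq_transpose_of_trivial] at this
      constructor
      · rw [hPhat t]; exact hAP.add hQ
      · rw [hPhat t, Matrix.mul_add, Matrix.add_mul]
        have h1 : (C * (A * Pbar t * Aᵀ) * Cᵀ).PosSemidef := by
          have := hpbar.mul_mul_conjTranspose_same (C * A)
          rw [conjTranspose_eq_transpose_of_trivial, Matrix.transpose_mul] at this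
          have e : C * A * Pbar t * (Aᵀ * Cᵀ) = C * (A * Pbar t * Aᵀ) * Cᵀ := by
            simp only [Matrix.mul_assoc]
          rwa [e] at this
        exact Matrix.PosDef.posSemidef_add h1 hCQ
  have keyKC : ∀ t, K t * (C * Phat t * Cᵀ) * (K t)ᵀ = K t * C * Phat t := by
    intro t
    obtain ⟨hp, hm⟩ := inv t
    have hdet : IsUnit (C * Phat t * Cᵀ).det := isUnit_iff_ne_zero.mpr hm.det_pos.ne'
    have hMsym : (C * Phat t * Cᵀ)ᵀ = C * Phat t * Cᵀ := sym_of_posDef hm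
    have hMinv : ((C * Phat t * Cᵀ)⁻¹)ᵀ = (C * Phat t * Cᵀ)⁻¹ := by
      rw [transpose_nonsing_inv, hMsym]
    have hKT : (K t)ᵀ = (C * Phat t * Cᵀ)⁻¹ * C * Phat t := by
      rw [hK t, Matrix.transpose_mul, Matrix.transpose_mul, hMinv, transpose_transpose,
        sym_of_posSemidef hp]
      simp only [Matrix.mul_assoc]
    rw [hKT, hK t]
    calc Phat t * Cᵀ * (C * Phat t * Cᵀ)⁻¹ * (C * Phat t * Cᵀ)
            * ((C * Phat t * Cᵀ)⁻¹ * C * Phat t)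
        = Phat t * Cᵀ * (((C * Phat t * Cᵀ)⁻¹ * (C * Phat t * Cᵀ))
            * ((C * Phat t * Cᵀ)⁻¹ * (C * Phat t))) := by simp only [Matrix.mul_assoc]
      _ = Phat t * Cᵀ * (C * Phat t * Cᵀ)⁻¹ * C * Phat t := by
          rw [nonsing_inv_mul _ hdet, Matrix.one_mul]
          simp only [Matrix.mul_assoc]
  intro t
  induction t with
  | zero => rw [hSzero, hSbzero]; abel
  | succ t ih =>
    calc S (t + 1) = A * S t * Aᵀ + Q := hS t
      _ = A * (Sb t + Pbar t) * Aᵀ + Q := by rw [ih]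
      _ = A * Sb t * Aᵀ + (A * Pbar t * Aᵀ + Q) := by
          rw [Matrix.mul_add, Matrix.add_mul]; abel
      _ = A * Sb t * Aᵀ + Phat (t + 1) := by rw [← hPhat t]
      _ = (A * Sb t * Aᵀ + K (t + 1) * (C * Phat (t + 1) * Cᵀ) * (K (t + 1))ᵀ)
          + (Phat (t + 1) - K (t + 1) * C * Phat (t + 1)) := by
          rw [keyKC (t + 1)]; abel
      _ = Sb (t + 1) + Pbar (t + 1) := by rw [← hSb t, ← hPbar (t + 1)]
end

section
/- Let A ∈ ℝ^{n×n}, C ∈ ℝ^{q×n}, and let Σ₀, Q ∈ ℝ^{n×n} be symmetric positive semidefinite with C Σ₀ Cᵀ and C Q Cᵀ positive definite. Define the Kalman covariance recursion: P̂(0) = Σ₀; for t ≥ 0, K(t) = P̂(t) Cᵀ (C P̂(t) Cᵀ)⁻¹, P̄(t) = P̂(t) − K(t) C P̂(t), and P̂(t+1) = A P̄(t) Aᵀ + Q. Define also Σ(0) = Σ₀, Σ(t+1) = A Σ(t) Aᵀ + Q, and Σ̄(0) = Σ₀ − P̄(0), Σ̄(t+1) = A Σ̄(t) Aᵀ + K(t+1)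 (C P̂(t+1) Cᵀ) K(t+1)ᵀ. Then for every t ≥ 0 and every j ≥ 0, C A^j Σ(t) Cᵀ = C A^j Σ̄(t) Cᵀ; in particular, for any N ∈ ℝ^{p×q} and H := N C, H A^j Σ(t) Hᵀ = H A^j Σ̄(t) Hᵀ. -/
open Matrix

lemma E_posSemidef {n q : ℕ} (B : Matrix (Fin q) (Fin n) ℝ) (M : Matrix (Fin q) (Fin q) ℝ)
    (hMB : M = B * Bᵀ) (hMinv : M⁻¹ * M = 1) (hMsymm : M⁻¹ᵀ = M⁻¹) :
    ((1 : Matrix (Fin n) (Fin n) ℝ) - Bᵀ * M⁻¹ * B).PosSemidef := by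
  have hEsymm : ((1 : Matrix (Fin n) (Fin n) ℝ) - Bᵀ * M⁻¹ * B)ᵀ
      = 1 - Bᵀ * M⁻¹ * B := by
    simp [transpose_sub, transpose_mul, hMsymm, Matrix.mul_assoc]
  have h1 : (Bᵀ * M⁻¹ * B) * (Bᵀ * M⁻¹ * B) = Bᵀ * M⁻¹ * B := by
    calc (Bᵀ * M⁻¹ * B) * (Bᵀ * M⁻¹ * B)
        = Bᵀ * ((M⁻¹ * (B * Bᵀ)) * M⁻¹) * B := by simp only [Matrix.mul_assoc]
      _ = Bᵀ * M⁻¹ * B := by rw [← hMB, hMinv, one_mul]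
  have hEE : ((1 : Matrix (Fin n) (Fin n) ℝ) - Bᵀ * M⁻¹ * B)ᵀ
      * (1 - Bᵀ * M⁻¹ * B) = 1 - Bᵀ * M⁻¹ * B := by
    rw [hEsymm, sub_mul, mul_sub, mul_sub, h1]
    simp
  have := posSemidef_conjTranspose_mul_self ((1 : Matrix (Fin n) (Fin n) ℝ) - Bᵀ * M⁻¹ * B)
  rwa [conjTranspose_eq_transpose_of_trivial, hEE] at this

open scoped MatrixOrder in
lemma pbar_posSemidef {n q : ℕ} (C : Matrix (Fin q) (Fin n) ℝ)
    (P : Matrix (Fin n) (Fin n) ℝ) (hP : P.PosSemidef)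
    (hM : (C * P * Cᵀ).PosDef) :
    (P - P * Cᵀ * (C * P * Cᵀ)⁻¹ * (C * P)).PosSemidef := by
  have hMinv : (C * P * Cᵀ)⁻¹ * (C * P * Cᵀ) = 1 :=
    nonsing_inv_mul _ ((isUnit_iff_isUnit_det _).1 hM.isUnit)
  have hMsymm : (C * P * Cᵀ)⁻¹ᵀ = (C * P * Cᵀ)⁻¹ := by
    rw [transpose_nonsing_inv]
    congr 1
    have := hM.isHermitian
    rwa [IsHermitian, conjTranspose_eq_transpose_of_trivial] at this
  have hRR : (CFC.sqrt P) * (CFC.sqrt P) = P := CFC.sqrt_mul_sqrt_self P hP.nonneg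
  have hRsymm : (CFC.sqrt P)ᵀ = (CFC.sqrt P) := by
    have := (CFC.sqrt_nonneg P).posSemidef.isHermitian
    rwa [IsHermitian, conjTranspose_eq_transpose_of_trivial] at this
  have hMB : C * P * Cᵀ = (C * (CFC.sqrt P)) * (C * (CFC.sqrt P))ᵀ := by
    rw [transpose_mul, hRsymm]
    calc C * P * Cᵀ = C * ((CFC.sqrt P) * (CFC.sqrt P)) * Cᵀ := by rw [hRR]
      _ = C * (CFC.sqrt P) * ((CFC.sqrt P) * Cᵀ) := by simp only [Matrix.mul_assoc]
  have hEpsd := E_posSemidef (C * (CFC.sqrt P)) (C * P * Cᵀ) hMB hMinv hMsymm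
  have key : P - P * Cᵀ * (C * P * Cᵀ)⁻¹ * (C * P)
      = (CFC.sqrt P)ᵀ * (1 - (C * (CFC.sqrt P))ᵀ * (C * P * Cᵀ)⁻¹ * (C * (CFC.sqrt P))) * (CFC.sqrt P) := by
    rw [hRsymm, transpose_mul, hRsymm, mul_sub, mul_one, sub_mul]
    congr 1
    · exact hRR.symm
    · calc P * Cᵀ * (C * P * Cᵀ)⁻¹ * (C * P)
          = (CFC.sqrt P) * (CFC.sqrt P) * Cᵀ * (C * P * Cᵀ)⁻¹ * (C * ((CFC.sqrt P) * (CFC.sqrt P))) := by rw [hRR]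
        _ = (CFC.sqrt P) * ((CFC.sqrt P) * Cᵀ * (C * P * Cᵀ)⁻¹ * (C * (CFC.sqrt P))) * (CFC.sqrt P) := by
            simp only [Matrix.mul_assoc]
  rw [key]
  have := hEpsd.conjTranspose_mul_mul_same (CFC.sqrt P)
  rwa [conjTranspose_eq_transpose_of_trivial] at this


/-- **Equality of output cross-covariances of the original and abstract models.** With `Σ t`
(here `S t`) the state covariance of the original system and `Σ̄ t` (here `Sb t`) the state
covariance of the a posteriori innovation process, for all `t, j` one has
`C * A ^ j * Σ t * Cᵀ = C * A ^ j * Σ̄ t * Cᵀ`; in particular, for every `N` and `H := N * C`,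
`H * A ^ j * Σ t * Hᵀ = H * A ^ j * Σ̄ t * Hᵀ`. -/
theorem output_cross_covariances_eq {n q : ℕ}
    (A : Matrix (Fin n) (Fin n) ℝ) (C : Matrix (Fin q) (Fin n) ℝ)
    (S0 Q : Matrix (Fin n) (Fin n) ℝ)
    (hS0 : S0.PosSemidef) (hQ : Q.PosSemidef)
    (hCS0 : (C * S0 * Cᵀ).PosDef) (hCQ : (C * Q * Cᵀ).PosDef)
    (Phat Pbar : ℕ → Matrix (Fin n) (Fin n) ℝ) (K : ℕ → Matrix (Fin n) (Fin q) ℝ)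
    (hPhat0 : Phat 0 = S0)
    (hK : ∀ t, K t = Phat t * Cᵀ * (C * Phat t * Cᵀ)⁻¹)
    (hPbar : ∀ t, Pbar t = Phat t - K t * C * Phat t)
    (hPhat : ∀ t, Phat (t + 1) = A * Pbar t * Aᵀ + Q)
    (S Sb : ℕ → Matrix (Fin n) (Fin n) ℝ)
    (hSzero : S 0 = S0)
    (hS : ∀ t, S (t + 1) = A * S t * Aᵀ + Q)
    (hSbzero : Sb 0 = S0 - Pbar 0)
    (hSb : ∀ t, Sb (t + 1) = A * Sb t * Aᵀ + K (t + 1) * (C * Phat (t + 1) * Cᵀ) * (K (t + 1))ᵀ) :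
    ∀ t j : ℕ,
      C * A ^ j * S t * Cᵀ = C * A ^ j * Sb t * Cᵀ ∧
      ∀ (p : ℕ) (N : Matrix (Fin p) (Fin q) ℝ),
        (N * C) * A ^ j * S t * (N * C)ᵀ = (N * C) * A ^ j * Sb t * (N * C)ᵀ := by
  -- rewrite Pbar in the convenient associated form
  have hPbar' : ∀ t, Pbar t = Phat t - Phat t * Cᵀ * (C * Phat t * Cᵀ)⁻¹ * (C * Phat t) := by
    intro t
    rw [hPbar, hK]
    congr 1
    simp only [Matrix.mul_assoc]
  -- invariant: Phat psd and C Phat Cᵀ posdef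
  have inv : ∀ t, (Phat t).PosSemidef ∧ (C * Phat t * Cᵀ).PosDef := by
    intro t
    induction t with
    | zero => rw [hPhat0]; exact ⟨hS0, hCS0⟩
    | succ t ih =>
      have hPb : (Pbar t).PosSemidef := by
        rw [hPbar' t]; exact pbar_posSemidef C (Phat t) ih.1 ih.2
      have h1 : (A * Pbar t * Aᵀ).PosSemidef := by
        have := hPb.mul_mul_conjTranspose_same A
        rwa [conjTranspose_eq_transpose_of_trivial] at this
      have h2 : (Phat (t + 1)).PosSemidef := by
        rw [hPhat t]; exact h1.add hQ
      refine ⟨h2, ?_⟩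
      rw [hPhat t]
      have e : C * (A * Pbar t * Aᵀ + Q) * Cᵀ
          = (C * A) * Pbar t * (C * A)ᵀ + C * Q * Cᵀ := by
        rw [Matrix.mul_add, Matrix.add_mul, transpose_mul]
        congr 1
        simp only [Matrix.mul_assoc]
      rw [e]
      have h3 : ((C * A) * Pbar t * (C * A)ᵀ).PosSemidef := by
        have := hPb.mul_mul_conjTranspose_same (C * A)
        rwa [conjTranspose_eq_transpose_of_trivial] at this
      exact Matrix.PosDef.posSemidef_add h3 hCQ
  -- Pbar t * Cᵀ = 0
  have hPbarC : ∀ t, Pbar t * Cᵀ = 0 := by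
    intro t
    have hMinv : (C * Phat t * Cᵀ)⁻¹ * (C * Phat t * Cᵀ) = 1 :=
      nonsing_inv_mul _ ((isUnit_iff_isUnit_det _).1 (inv t).2.isUnit)
    rw [hPbar' t, Matrix.sub_mul]
    have e : Phat t * Cᵀ * (C * Phat t * Cᵀ)⁻¹ * (C * Phat t) * Cᵀ
        = Phat t * Cᵀ * ((C * Phat t * Cᵀ)⁻¹ * (C * Phat t * Cᵀ)) := by
      simp only [Matrix.mul_assoc]
    rw [e, hMinv, Matrix.mul_one, sub_self]
  -- S t - Sb t = Pbar t
  have hD : ∀ t, S t - Sb t = Pbar t := by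
    intro t
    induction t with
    | zero => rw [hSzero, hSbzero, sub_sub_cancel]
    | succ t ih =>
      have hsym : (Phat (t + 1))ᵀ = Phat (t + 1) := by
        have := (inv (t + 1)).1.isHermitian
        rwa [IsHermitian, conjTranspose_eq_transpose_of_trivial] at this
      have hMinv : (C * Phat (t + 1) * Cᵀ)⁻¹ * (C * Phat (t + 1) * Cᵀ) = 1 :=
        nonsing_inv_mul _ ((isUnit_iff_isUnit_det _).1 (inv (t + 1)).2.isUnit)
      have hMsymm : (C * Phat (t + 1) * Cᵀ)⁻¹ᵀ = (C * Phat (t + 1) * Cᵀ)⁻¹ := by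
        rw [transpose_nonsing_inv]
        congr 1
        have := (inv (t + 1)).2.isHermitian
        rwa [IsHermitian, conjTranspose_eq_transpose_of_trivial] at this
      have hKT : (K (t + 1))ᵀ = (C * Phat (t + 1) * Cᵀ)⁻¹ * (C * Phat (t + 1)) := by
        rw [hK, transpose_mul, hMsymm, transpose_mul, transpose_transpose, hsym]
      have hKMK : K (t + 1) * (C * Phat (t + 1) * Cᵀ) * (K (t + 1))ᵀ
          = K (t + 1) * C * Phat (t + 1) := by
        rw [hKT]
        conv_lhs => rw [hK]
        calc Phat (t + 1) * Cᵀ * (C * Phat (t + 1) * Cᵀ)⁻¹ * (C * Phat (t + 1) * Cᵀ) *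
              ((C * Phat (t + 1) * Cᵀ)⁻¹ * (C * Phat (t + 1)))
            = Phat (t + 1) * Cᵀ * (((C * Phat (t + 1) * Cᵀ)⁻¹ * (C * Phat (t + 1) * Cᵀ)) *
              ((C * Phat (t + 1) * Cᵀ)⁻¹ * (C * Phat (t + 1)))) := by
              simp only [Matrix.mul_assoc]
          _ = Phat (t + 1) * Cᵀ * ((C * Phat (t + 1) * Cᵀ)⁻¹ * (C * Phat (t + 1))) := by
              rw [hMinv, Matrix.one_mul]
          _ = K (t + 1) * C * Phat (t + 1) := by rw [hK]; simp only [Matrix.mul_assoc]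
      rw [hS, hSb, hKMK, hPbar (t + 1), hPhat t, ← ih, mul_sub, sub_mul]
      abel
  intro t j
  have eq1 : C * A ^ j * S t * Cᵀ = C * A ^ j * Sb t * Cᵀ := by
    have h0 : C * A ^ j * (S t - Sb t) * Cᵀ = 0 := by
      rw [hD t, Matrix.mul_assoc (C * A ^ j) (Pbar t) Cᵀ, hPbarC t, Matrix.mul_zero]
    rw [Matrix.mul_sub, Matrix.sub_mul] at h0
    exact sub_eq_zero.mp h0
  refine ⟨eq1, fun p N => ?_⟩
  calc N * C * A ^ j * S t * (N * C)ᵀ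
      = N * (C * A ^ j * S t * Cᵀ) * Nᵀ := by
        rw [transpose_mul]; simp only [Matrix.mul_assoc]
    _ = N * (C * A ^ j * Sb t * Cᵀ) * Nᵀ := by rw [eq1]
    _ = N * C * A ^ j * Sb t * (N * C)ᵀ := by
        rw [transpose_mul]; simp only [Matrix.mul_assoc]
end

section
/- Let A ∈ ℝ^{n×n}, C ∈ ℝ^{q×n}, Q, Σ₀ ∈ ℝ^{n×n} symmetric positive semidefinite, and let X ∈ ℝ^{n×n} be symmetric positive definite with C X Cᵀ positive definite, satisfying the discrete-time algebraic Riccati equation X = A X Aᵀ − A X Cᵀ (C X Cᵀ)⁻¹ C X Aᵀ + Q. Set K := X Cᵀ (C X Cᵀ)⁻¹ and P := X − K C X. Define Σ(0) = Σ₀, Σ(t+1) = A Σ(t) Aᵀ + Q, and Σ̄(0) = Σ₀ − P, Σ̄(t+1) = A Σ̄(t) Aᵀ + K (C X Cᵀ) Kᵀ. Then for every t ≥ 0, Σ(t) = Σ̄(t) + P, and consequently C A^j Σ(t) Cᵀ = C A^j Σ̄(t) Cᵀ for all j, t ≥ 0. -/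
open Matrix

/-- **Covariance identity for the time-invariant abstract model (Theorem 2 of the paper).**
Let `X ≻ 0` solve the DARE `X = A X Aᵀ - A X Cᵀ (C X Cᵀ)⁻¹ C X Aᵀ + Q` with `C X Cᵀ ≻ 0`, and
set `K := X Cᵀ (C X Cᵀ)⁻¹` and `P := X - K C X`. If `Σ t` (here `S t`) is the state covariance
of the original system (`Σ 0 = Σ₀`, `Σ (t+1) = A Σ t Aᵀ + Q`) and `Σ̄ t` (here `Sb t`) that of
the time-invariant abstract model (`Σ̄ 0 = Σ₀ - P`, `Σ̄ (t+1) = A Σ̄ t Aᵀ + K (C X Cᵀ) Kᵀ`),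
then `Σ t = Σ̄ t + P` for all `t`, and consequently
`C A^j Σ t Cᵀ = C A^j Σ̄ t Cᵀ` for all `j, t`. -/
theorem time_invariant_covariance_identity {n q : ℕ}
    (A : Matrix (Fin n) (Fin n) ℝ) (C : Matrix (Fin q) (Fin n) ℝ)
    (Q S0 X : Matrix (Fin n) (Fin n) ℝ)
    (hQ : Q.PosSemidef) (hS0 : S0.PosSemidef)
    (hX : X.PosDef) (hCX : (C * X * Cᵀ).PosDef)
    (hDARE : X = A * X * Aᵀ - A * X * Cᵀ * (C * X * Cᵀ)⁻¹ * (C * X * Aᵀ) + Q)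
    (K : Matrix (Fin n) (Fin q) ℝ) (P : Matrix (Fin n) (Fin n) ℝ)
    (hK : K = X * Cᵀ * (C * X * Cᵀ)⁻¹)
    (hP : P = X - K * (C * X))
    (S Sb : ℕ → Matrix (Fin n) (Fin n) ℝ)
    (hSzero : S 0 = S0)
    (hS : ∀ t, S (t + 1) = A * S t * Aᵀ + Q)
    (hSbzero : Sb 0 = S0 - P)
    (hSb : ∀ t, Sb (t + 1) = A * Sb t * Aᵀ + K * (C * X * Cᵀ) * Kᵀ) :
    (∀ t, S t = Sb t + P) ∧
      ∀ j t : ℕ, C * A ^ j * S t * Cᵀ = C * A ^ j * Sb t * Cᵀ := by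
  have hXs : Xᵀ = X := by
    have := hX.isHermitian
    simpa [Matrix.IsHermitian, Matrix.conjTranspose_eq_transpose_of_trivial] using this
  have hMs : (C * X * Cᵀ)ᵀ = C * X * Cᵀ := by
    have := hCX.isHermitian
    simpa [Matrix.IsHermitian, Matrix.conjTranspose_eq_transpose_of_trivial] using this
  have hdet : IsUnit (C * X * Cᵀ).det := by
    exact isUnit_iff_ne_zero.mpr (ne_of_gt hCX.det_pos)
  have hMinv : (C * X * Cᵀ) * (C * X * Cᵀ)⁻¹ = 1 := Matrix.mul_nonsing_inv _ hdet
  have hMinv' : (C * X * Cᵀ)⁻¹ * (C * X * Cᵀ) = 1 := Matrix.nonsing_inv_mul _ hdet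
  -- transpose of K
  have hKT : Kᵀ = (C * X * Cᵀ)⁻¹ * (C * X) := by
    rw [hK, Matrix.transpose_mul, Matrix.transpose_nonsing_inv, hMs,
      Matrix.transpose_mul, Matrix.transpose_transpose, hXs]
  -- K (C X Cᵀ) Kᵀ = K C X
  have hKCK : K * (C * X * Cᵀ) * Kᵀ = K * (C * X) := by
    rw [hKT, Matrix.mul_assoc, ← Matrix.mul_assoc (C * X * Cᵀ), hMinv, Matrix.one_mul]
  -- P Cᵀ = 0
  have hPC : P * Cᵀ = 0 := by
    rw [hP, Matrix.sub_mul, hK]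
    have h2 : (C * (X * Cᵀ))⁻¹ * (C * (X * Cᵀ)) = 1 := by
      have : C * (X * Cᵀ) = C * X * Cᵀ := by rw [Matrix.mul_assoc]
      rw [this]; exact hMinv'
    have : X * Cᵀ * (C * X * Cᵀ)⁻¹ * (C * X) * Cᵀ = X * Cᵀ := by
      simp only [Matrix.mul_assoc]
      rw [h2, Matrix.mul_one]
    rw [this, sub_self]
  -- A P Aᵀ + Q = X
  have hAPA : A * P * Aᵀ + Q = X := by
    rw [hP, hK]
    have expand : A * (X - X * Cᵀ * (C * X * Cᵀ)⁻¹ * (C * X)) * Aᵀ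
        = A * X * Aᵀ - A * X * Cᵀ * (C * X * Cᵀ)⁻¹ * (C * X * Aᵀ) := by
      rw [Matrix.mul_sub, Matrix.sub_mul]
      congr 1
      simp only [Matrix.mul_assoc]
    rw [expand, ← hDARE]
  -- the step identity
  have hstep : A * P * Aᵀ + Q = K * (C * X * Cᵀ) * Kᵀ + P := by
    rw [hAPA, hKCK, hP, add_comm]
    rw [sub_add_cancel]
  have h1 : ∀ t, S t = Sb t + P := by
    intro t
    induction t with
    | zero => rw [hSzero, hSbzero]; abel
    | succ t ih =>
        rw [hS, hSb, ih]
        have hsplit : A * (Sb t + P) * Aᵀ = A * Sb t * Aᵀ + A * P * Aᵀ := by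
          noncomm_ring
        rw [hsplit, add_assoc, hstep, ← add_assoc]
  refine ⟨h1, fun j t => ?_⟩
  rw [h1 t, Matrix.mul_add, Matrix.add_mul]
  have : C * A ^ j * P * Cᵀ = 0 := by
    rw [Matrix.mul_assoc, hPC, Matrix.mul_zero]
  rw [this, add_zero]
end
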